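/- arXiv:1304.0801 — 3 statements merged into one kernel-verified Lean document; each statement's English description precedes it below -/
import Mathlib

section
/- Let p(z)=Σ_{k≥0} a_k z^k and q(z)=Σ_{k≥0} b_k z^k be formal power series with real coefficients, a_0 = 1, and suppose β := b_1 − a_1 b_0 ≠ 0. Define the formal power series p_1(z) := (q(z) − b_0 p(z))/(β z). Then for all integers k ≥ 2 and i ≥ k, the minor of H(p,q) on rows 2,3,…,k,k+1 and columns 2,3,…,k,i+1 equals β^{⌊k/2⌋} times the minor of H(p_1,p) on rows 2,3,…,k−1,k and columns 2,3,…,k−1,i. -/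
noncomputable section

/-- Coefficient extraction from a sequence, zero for negative indices. -/
def coeffZ (f : ℕ → ℝ) (n : ℤ) : ℝ := if 0 ≤ n then f n.toNat else 0

/-- The infinite Hurwitz-type matrix `H(p,q)` of the pair of series with coefficient
sequences `a` (for `p`) and `b` (for `q`), using 0-based indices: row `2j` is
`(…, b_{c-j}, …)` and row `2j+1` is `(…, a_{c-j-1}, …)`, i.e. the rows are
`(b₀,b₁,b₂,…)`, `(0,a₀,a₁,…)`, `(0,b₀,b₁,…)`, `(0,0,a₀,…)`, `(0,0,b₀,…)`, …. -/
def Hmat (a b : ℕ → ℝ) (r c : ℕ) : ℝ :=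
  if r % 2 = 0 then coeffZ b ((c : ℤ) - (r / 2 : ℕ)) else coeffZ a ((c : ℤ) - (r / 2 : ℕ) - 1)

lemma Hshift (x y : ℕ → ℝ) (r c : ℕ) : Hmat x y (r + 2) (c + 1) = Hmat x y r c := by
  have h1 : (r + 2) % 2 = r % 2 := by omega
  have h2 : (r + 2) / 2 = r / 2 + 1 := by omega
  by_cases h : r % 2 = 0 <;>
    simp only [Hmat, h1, h2, h, if_true, if_false] <;>
    · congr 1
      push_cast
      ring

lemma prodpow (β : ℝ) : ∀ m : ℕ,
    (∏ j ∈ Finset.range m, (if j % 2 = 1 then β else 1)) = β ^ (m / 2) := by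
  intro m
  induction m with
  | zero => simp
  | succ m ih =>
    rw [Finset.prod_range_succ, ih]
    by_cases h : m % 2 = 1
    · rw [if_pos h]
      have : (m + 1) / 2 = m / 2 + 1 := by omega
      rw [this, pow_succ]
    · rw [if_neg h]
      have : (m + 1) / 2 = m / 2 := by omega
      simp [this]

/-- Lemma on minors: if `β = b₁ - a₁b₀ ≠ 0` and `p₁(z) = (q(z) - b₀p(z))/(βz)`, then the
minor of `H(p,q)` on rows `2,…,k,k+1` and columns `2,…,k,i+1` (1-based) equals
`β^⌊k/2⌋` times the minor of `H(p₁,p)` on rows `2,…,k-1,k` and columns `2,…,k-1,i`.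
In the 0-based indexing used here, the first minor is over rows `1,…,k` and columns
`1,…,k-1,i`, and the second over rows `1,…,k-1` and columns `1,…,k-2,i-1`. -/
theorem stmt5 (a b : ℕ → ℝ) (ha0 : a 0 = 1)
    (hβ : b 1 - a 1 * b 0 ≠ 0)
    (p₁ : ℕ → ℝ) (hp₁ : ∀ k, p₁ k = (b (k + 1) - b 0 * a (k + 1)) / (b 1 - a 1 * b 0)) :
    ∀ k i : ℕ, 2 ≤ k → k ≤ i →
      (Matrix.of fun l m : Fin k =>
          Hmat a b ((l : ℕ) + 1) (if (m : ℕ) < k - 1 then (m : ℕ) + 1 else i)).det =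
        (b 1 - a 1 * b 0) ^ (k / 2) *
          (Matrix.of fun l m : Fin (k - 1) =>
            Hmat p₁ a ((l : ℕ) + 1) (if (m : ℕ) < k - 2 then (m : ℕ) + 1 else i - 1)).det := by
  intro k i hk hki
  obtain ⟨n, rfl⟩ : ∃ n, k = n + 2 := ⟨k - 2, by omega⟩
  set β := b 1 - a 1 * b 0 with hβdef
  -- key coefficient identity
  have key : ∀ m : ℤ, coeffZ b m = b 0 * coeffZ a m + β * coeffZ p₁ (m - 1) := by
    intro m
    unfold coeffZ
    rcases lt_trichotomy m 0 with h | h | h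
    · rw [if_neg (by omega), if_neg (by omega), if_neg (by omega)]; ring
    · subst h
      rw [if_pos le_rfl, if_pos le_rfl, if_neg (by omega)]
      simp [ha0]
    · rw [if_pos (by omega), if_pos (by omega), if_pos (by omega)]
      have hm : m.toNat = (m - 1).toNat + 1 := by omega
      rw [hm, hp₁]
      rw [mul_div_cancel₀ _ hβ]
      ring
  -- the transformed matrix
  set M' : Matrix (Fin (n + 2)) (Fin (n + 2)) ℝ := fun l m =>
    Hmat p₁ a ((l : ℕ) + 2) (if (m : ℕ) < n + 1 then (m : ℕ) + 1 else i) with hM'def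
  -- the elementary row-operation matrix
  set L : Matrix (Fin (n + 2)) (Fin (n + 2)) ℝ := fun l m =>
    (if m = l then (if (l : ℕ) % 2 = 1 then β else 1) else 0) +
      (if (l : ℕ) % 2 = 1 ∧ (l : ℕ) = (m : ℕ) + 1 then b 0 else 0) with hLdef
  have hfact : (Matrix.of fun l m : Fin (n + 2) =>
      Hmat a b ((l : ℕ) + 1) (if (m : ℕ) < n + 2 - 1 then (m : ℕ) + 1 else i)) = L * M' := by
    ext l j
    rw [Matrix.mul_apply]
    set cv : ℕ := if (j : ℕ) < n + 1 then (j : ℕ) + 1 else i with hcv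
    have hsplit : ∀ m : Fin (n + 2), L l m * M' m j =
        (if m = l then (if (l : ℕ) % 2 = 1 then β else 1) * M' m j else 0) +
        (if (l : ℕ) % 2 = 1 ∧ (l : ℕ) = (m : ℕ) + 1 then b 0 * M' m j else 0) := by
      intro m
      rw [hLdef]
      simp only [add_mul, ite_mul, zero_mul]
    rw [Finset.sum_congr rfl (fun m _ => hsplit m), Finset.sum_add_distrib]
    have h1 : (∑ m : Fin (n + 2),
        if m = l then (if (l : ℕ) % 2 = 1 then β else 1) * M' m j else 0) =
        (if (l : ℕ) % 2 = 1 then β else 1) * M' l j := by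
      rw [Finset.sum_ite_eq' Finset.univ l]
      simp
    rw [h1]
    by_cases ho : (l : ℕ) % 2 = 1
    · have hl1 : 1 ≤ (l : ℕ) := by omega
      set m₀ : Fin (n + 2) := ⟨(l : ℕ) - 1, by omega⟩ with hm₀
      have h2 : (∑ m : Fin (n + 2),
          if (l : ℕ) % 2 = 1 ∧ (l : ℕ) = (m : ℕ) + 1 then b 0 * M' m j else 0) =
          b 0 * M' m₀ j := by
        rw [Finset.sum_eq_single m₀]
        · rw [if_pos ⟨ho, by simp [hm₀]; omega⟩]
        · intro m _ hm
          rw [if_neg]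
          rintro ⟨-, h⟩
          exact hm (Fin.ext (by simp [hm₀]; omega))
        · intro h; exact absurd (Finset.mem_univ m₀) h
      rw [h2, if_pos ho]
      -- now the coefficient identity, odd row
      show Hmat a b ((l : ℕ) + 1) cv = β * M' l j + b 0 * M' m₀ j
      have hml : M' l j = coeffZ p₁ ((cv : ℤ) - ((l : ℕ) / 2 + 1 : ℕ) - 1) := by
        simp only [hM'def]
        rw [← hcv]
        unfold Hmat
        rw [if_neg (by omega), show ((l : ℕ) + 2) / 2 = (l : ℕ) / 2 + 1 by omega]
      have hmm₀ : M' m₀ j = coeffZ a ((cv : ℤ) - ((l : ℕ) / 2 + 1 : ℕ)) := by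
        simp only [hM'def, hm₀]
        rw [← hcv]
        unfold Hmat
        rw [if_pos (by omega), show ((l : ℕ) - 1 + 2) / 2 = (l : ℕ) / 2 + 1 by omega]
      rw [hml, hmm₀]
      unfold Hmat
      rw [if_pos (by omega), show ((l : ℕ) + 1) / 2 = (l : ℕ) / 2 + 1 by omega]
      rw [key ((cv : ℤ) - ((l : ℕ) / 2 + 1 : ℕ))]
      push_cast
      ring_nf
    · have h2 : (∑ m : Fin (n + 2),
          if (l : ℕ) % 2 = 1 ∧ (l : ℕ) = (m : ℕ) + 1 then b 0 * M' m j else 0) = 0 := by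
        apply Finset.sum_eq_zero
        intro m _
        rw [if_neg (by tauto)]
      rw [h2, if_neg ho, add_zero, one_mul]
      show Hmat a b ((l : ℕ) + 1) cv = M' l j
      simp only [hM'def]
      rw [← hcv]
      unfold Hmat
      rw [if_neg (by omega), if_pos (by omega),
        show ((l : ℕ) + 2) / 2 = (l : ℕ) / 2 + 1 by omega,
        show ((l : ℕ) + 1) / 2 = (l : ℕ) / 2 by omega]
      congr 1
      push_cast
      ring
  -- determinant of L
  have hdetL : L.det = β ^ ((n + 2) / 2) := by
    have htri : L.BlockTriangular OrderDual.toDual := by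
      intro x y hxy
      have hv : (x : ℕ) < (y : ℕ) := hxy
      simp only [hLdef]
      rw [if_neg (fun h => by rw [h] at hv; omega), if_neg (by omega)]
      ring
    rw [Matrix.det_of_lowerTriangular L htri]
    have hdiag : ∀ l : Fin (n + 2), L l l = (if (l : ℕ) % 2 = 1 then β else 1) := by
      intro l
      simp only [hLdef, if_true]
      have hne : ¬((l : ℕ) % 2 = 1 ∧ (l : ℕ) = (l : ℕ) + 1) := by omega
      rw [if_neg hne, add_zero]
    rw [Finset.prod_congr rfl (fun l _ => hdiag l)]
    rw [← prodpow β (n + 2), ← Fin.prod_univ_eq_prod_range (fun j => if j % 2 = 1 then β else 1)]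
  -- expansion of det M' along the first column
  have hcol0 : ∀ l : Fin (n + 2), l ≠ 0 → M' l 0 = 0 := by
    intro l hl
    have hl1 : 1 ≤ (l : ℕ) := by
      rcases Nat.eq_zero_or_pos (l : ℕ) with h | h
      · exact absurd (Fin.ext h) hl
      · exact h
    simp only [hM'def, Fin.val_zero]
    show Hmat p₁ a ((l : ℕ) + 2) (if (0:ℕ) < n + 1 then 0 + 1 else i) = 0
    rw [if_pos (by omega)]
    unfold Hmat coeffZ
    by_cases h : ((l : ℕ) + 2) % 2 = 0 <;>
      · simp only [h, if_true, if_false, reduceIte]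
        rw [if_neg (by omega)]
  have h00 : M' 0 0 = 1 := by
    simp only [hM'def, Fin.val_zero]
    show Hmat p₁ a (0 + 2) (if (0:ℕ) < n + 1 then 0 + 1 else i) = 1
    rw [if_pos (by omega)]
    unfold Hmat coeffZ
    norm_num [ha0]
  have hdetM' : M'.det = (Matrix.of fun l m : Fin (n + 1) =>
      Hmat p₁ a ((l : ℕ) + 1) (if (m : ℕ) < n then (m : ℕ) + 1 else i - 1)).det := by
    rw [Matrix.det_succ_column_zero]
    rw [Finset.sum_eq_single (0 : Fin (n + 2))]
    · rw [h00]
      simp only [Fin.val_zero, pow_zero, one_mul, mul_one]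
      congr 1
      ext l m
      simp only [Matrix.submatrix_apply, Matrix.of_apply, Fin.succAbove_zero, hM'def,
        Fin.val_succ]
      have hcolv : (if (m : ℕ) + 1 < n + 1 then (m : ℕ) + 1 + 1 else i) =
          (if (m : ℕ) < n then (m : ℕ) + 1 else i - 1) + 1 := by
        by_cases h : (m : ℕ) < n
        · rw [if_pos (by omega), if_pos h]
        · rw [if_neg (by omega), if_neg h]
          omega
      show Hmat p₁ a ((l : ℕ) + 1 + 2) (if (m : ℕ) + 1 < n + 1 then (m : ℕ) + 1 + 1 else i) = _
      rw [hcolv, show (l : ℕ) + 1 + 2 = (l : ℕ) + 1 + 2 from rfl]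
      exact Hshift p₁ a ((l : ℕ) + 1) _
    · intro l _ hl
      rw [hcol0 l hl]
      ring
    · intro h; exact absurd (Finset.mem_univ _) h
  calc (Matrix.of fun l m : Fin (n + 2) =>
      Hmat a b ((l : ℕ) + 1) (if (m : ℕ) < n + 2 - 1 then (m : ℕ) + 1 else i)).det
      = (L * M').det := by rw [hfact]
    _ = L.det * M'.det := Matrix.det_mul L M'
    _ = β ^ ((n + 2) / 2) * (Matrix.of fun l m : Fin (n + 1) =>
          Hmat p₁ a ((l : ℕ) + 1) (if (m : ℕ) < n then (m : ℕ) + 1 else i - 1)).det := by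
        rw [hdetL, hdetM']

end
end

section
/- Let p(z)=Σ_{k≥0} a_k z^k and q(z)=Σ_{k≥0} b_k z^k be real formal power series with a_0 = 1, b_0 ≥ 0 and q not identically zero. Suppose that every minor of H(p,q) on rows 2,3,…,k−1,k and columns 2,3,…,k−1,i is nonnegative, for all integers k ≥ 2 and i ≥ k. Then q(z) = b_0·p(z) as formal power series if and only if b_1 − a_1 b_0 = 0 (this quantity being the 2×2 minor of H(p,q) on rows {2,3} and columns {2,3}). -/
noncomputable section

/-- Suppose every minor of `H(p,q)` on rows `2,…,k` and columns `2,…,k-1,i` (1-based;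
i.e. rows `1,…,k-1` and columns `1,…,k-2,i-1`, 0-based) is nonnegative for all `k ≥ 2`
and `i ≥ k`.  Then `q = b₀·p` (as formal power series) iff `b₁ - a₁b₀ = 0`. -/
theorem stmt14 (a b : ℕ → ℝ) (ha0 : a 0 = 1) (hb0 : 0 ≤ b 0)
    (hbne : ∃ k, b k ≠ 0)
    (hm : ∀ k i : ℕ, 2 ≤ k → k ≤ i →
      0 ≤ (Matrix.of fun l m : Fin (k - 1) =>
            Hmat a b ((l : ℕ) + 1) (if (m : ℕ) < k - 2 then (m : ℕ) + 1 else i - 1)).det) :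
    (∀ k, b k = b 0 * a k) ↔ b 1 - a 1 * b 0 = 0 := by
  constructor
  · intro h
    rw [h 1]; ring
  · intro h k
    match k with
    | 0 => rw [ha0]; ring
    | 1 => linarith
    | (n + 2) =>
      have h3 := hm 3 (n + 4) (by norm_num) (by omega)
      have h4 := hm 4 (n + 4) (by norm_num) (by omega)
      rw [Matrix.det_fin_two] at h3
      rw [Matrix.det_fin_three] at h4
      simp only [Matrix.of_apply, Fin.isValue, Fin.val_zero, Fin.val_one, Fin.val_two] at h3 h4
      norm_num [Hmat, coeffZ] at h3 h4
      have e0 : ((n:ℤ) + 3).toNat = n + 3 := by omega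
      rw [e0] at h3 h4
      simp only [show (1:ℤ) ≤ (n:ℕ) + 3 by omega, show (1:ℤ) ≤ (n:ℕ) + 3 - 1 by omega,
        if_true, ha0, one_mul, mul_one, show n + 3 - 1 = n + 2 from rfl,
        show n + 3 - 1 - 1 = n + 1 from rfl] at h3 h4
      simp only [show n + 2 - 1 = n + 1 from rfl, show (1:ℤ) < (n:ℤ) + 3 by omega, if_true] at h4
      have hx : (b 1 - a 1 * b 0) * a (n + 1) = 0 := by rw [h]; ring
      nlinarith [h3, h4, hx]
end
end

section
/- Let (τ_ν)_{ν≥1} and (σ_ν)_{ν≥1} be real sequences with 0 < τ_1 < σ_1 < τ_2 < σ_2 < τ_3 < ⋯ and Σ_{ν≥1} 1/τ_ν < ∞. Then the infinite product G(z) = ∏_{ν≥1} (1+z/τ_ν)/(1+z/σ_ν) converges to a meromorphic function on ℂ, and for every z with Im z > 0 the principal argument of G(z) satisfies 0 < Arg G(z) < π. In particular, G is an S-function. -/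
noncomputable section
set_option maxHeartbeats 1000000

open Complex Filter Finset Metric

namespace Stmt19Aux

variable {τ σ : ℕ → ℝ}


/-- The basic factor. -/
def fac (τ σ : ℕ → ℝ) (n : ℕ) (z : ℂ) : ℂ :=
  ((1 : ℂ) + z / (τ n : ℂ)) / ((1 : ℂ) + z / (σ n : ℂ))

lemma argUHP {w : ℂ} (hw : 0 < w.im) : 0 < w.arg ∧ w.arg < Real.pi := by
  constructor
  · rcases (Complex.arg_nonneg_iff.mpr hw.le).lt_or_eq with h | h
    · exact h
    · exfalso
      have h2 := (Complex.arg_eq_zero_iff.mp h.symm).2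
      linarith
  · rcases (Complex.arg_le_pi w).lt_or_eq with h | h
    · exact h
    · exfalso
      have h2 := (Complex.arg_eq_pi_iff.mp h).2
      linarith

lemma argDiv {u v : ℂ} (hu : 0 < u.im) (hv : 0 < v.im) : (u / v).arg = u.arg - v.arg := by
  have hu0 : u ≠ 0 := fun h => by rw [h] at hu; simp at hu
  have hv0 : v ≠ 0 := fun h => by rw [h] at hv; simp at hv
  have hA := argUHP hu
  have hB := argUHP hv
  have h1 := Complex.arg_div_coe_angle hu0 hv0
  have e1 : (((u / v).arg : ℝ) : Real.Angle).toReal = (u / v).arg :=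
    Real.Angle.toReal_coe_eq_self_iff.mpr ⟨Complex.neg_pi_lt_arg _, Complex.arg_le_pi _⟩
  have e2 : (((u.arg - v.arg : ℝ)) : Real.Angle).toReal = u.arg - v.arg :=
    Real.Angle.toReal_coe_eq_self_iff.mpr ⟨by linarith, by linarith⟩
  calc (u / v).arg = (((u / v).arg : ℝ) : Real.Angle).toReal := e1.symm
    _ = (((u.arg - v.arg : ℝ)) : Real.Angle).toReal := by
        rw [Real.Angle.coe_sub] at *
        rw [h1]
    _ = u.arg - v.arg := e2

lemma argExp {w : ℂ} (h1 : -Real.pi < w.im) (h2 : w.im ≤ Real.pi) :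
    (Complex.exp w).arg = w.im := by
  have : Complex.exp w = (Real.exp w.re : ℝ) * (Complex.cos w.im + Complex.sin w.im * I) := by
    rw [← Complex.re_add_im w, Complex.exp_add, Complex.exp_mul_I]
    rw [Complex.ofReal_exp]
    simp
  rw [this, Complex.arg_real_mul _ (Real.exp_pos _)]
  exact Complex.arg_cos_add_sin_mul_I ⟨h1, h2⟩

lemma hasProd_of_logs {f : ℕ → ℂ} (h0 : ∀ n, f n ≠ 0)
    (hs : Summable fun n => Complex.log (f n)) :
    HasProd f (Complex.exp (∑' n, Complex.log (f n))) := by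
  have h := hs.hasSum.cexp
  have he : Complex.exp ∘ (fun n => Complex.log (f n)) = f :=
    funext fun n => Complex.exp_log (h0 n)
  rwa [he] at h

lemma hasProd_zero {f : ℕ → ℂ} {n : ℕ} (h : f n = 0) : HasProd f 0 := by
  have hev : (fun _ : Finset ℕ => (0 : ℂ)) =ᶠ[atTop] fun s : Finset ℕ => ∏ i ∈ s, f i := by
    filter_upwards [eventually_ge_atTop ({n} : Finset ℕ)] with s hs
    exact (Finset.prod_eq_zero (hs (Finset.mem_singleton_self n)) h).symm
  exact Tendsto.congr' hev tendsto_const_nhds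

lemma tprod_conj (f : ℕ → ℂ) :
    (starRingEnd ℂ) (∏' n, f n) = ∏' n, (starRingEnd ℂ) (f n) := by
  by_cases h : Multipliable f
  · exact (h.hasProd.map (starRingEnd ℂ) Complex.continuous_conj).tprod_eq.symm
  · have h2 : ¬ Multipliable fun n => (starRingEnd ℂ) (f n) := by
      intro h2
      apply h
      have h3 := h2.hasProd.map (starRingEnd ℂ) Complex.continuous_conj
      have : ((starRingEnd ℂ) ∘ fun n => (starRingEnd ℂ) (f n)) = f := by
        funext n; simp
      rw [this] at h3
      exact h3.multipliable
    rw [tprod_eq_one_of_not_multipliable h, tprod_eq_one_of_not_multipliable h2, map_one]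

lemma im_one_add_div (z : ℂ) (t : ℝ) : ((1 : ℂ) + z / (t : ℂ)).im = z.im / t := by simp

lemma im_ratio (z : ℂ) {a b : ℝ} (ha : a ≠ 0) (hb : b ≠ 0) :
    (((1 : ℂ) + z / (a : ℂ)) / ((1 : ℂ) + z / (b : ℂ))).im
      = (z.im * ((b - a) / (a * b))) / Complex.normSq ((1 : ℂ) + z / (b : ℂ)) := by
  rw [Complex.div_im, div_sub_div_same]
  congr 1
  simp only [Complex.add_re, Complex.add_im, Complex.one_re, Complex.one_im,
    Complex.div_ofReal_re, Complex.div_ofReal_im]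
  field_simp
  ring

lemma one_add_div_ne_zero {z : ℂ} (hz : 0 < z.im) {t : ℝ} (ht : 0 < t) :
    (1 : ℂ) + z / (t : ℂ) ≠ 0 := by
  intro h
  have h2 : ((1 : ℂ) + z / (t : ℂ)).im = 0 := by rw [h]; simp
  rw [im_one_add_div] at h2
  have := div_pos hz ht
  linarith

lemma im_fac_pos {z : ℂ} (hz : 0 < z.im) {a b : ℝ} (ha : 0 < a) (hab : a < b) :
    0 < (((1 : ℂ) + z / (a : ℂ)) / ((1 : ℂ) + z / (b : ℂ))).im := by
  have hb : 0 < b := ha.trans hab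
  rw [im_ratio z ha.ne' (ha.trans hab).ne']
  exact div_pos (mul_pos hz (div_pos (sub_pos.mpr hab) (mul_pos ha hb)))
    (Complex.normSq_pos.mpr (one_add_div_ne_zero hz hb))

lemma im_fac_neg {z : ℂ} (hz : 0 < z.im) {a b : ℝ} (hb : 0 < b) (hab : b < a) :
    (((1 : ℂ) + z / (a : ℂ)) / ((1 : ℂ) + z / (b : ℂ))).im < 0 := by
  rw [im_ratio z (hb.trans hab).ne' hb.ne']
  apply div_neg_of_neg_of_pos
  · have : b - a < 0 := by linarith
    have ha : 0 < a := hb.trans hab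
    exact mul_neg_of_pos_of_neg hz (div_neg_of_neg_of_pos this (mul_pos ha hb))
  · exact Complex.normSq_pos.mpr (one_add_div_ne_zero hz hb)





lemma tau_pos (hτ0 : 0 < τ 0) (hτσ : ∀ n, τ n < σ n) (hστ : ∀ n, σ n < τ (n + 1)) :
    ∀ n, 0 < τ n := by
  intro n
  induction n with
  | zero => exact hτ0
  | succ k ih => exact ih.trans ((hτσ k).trans (hστ k))

lemma exists_tau_ge (htp : ∀ n, 0 < τ n) (hsum : Summable fun n => 1 / τ n) (C : ℝ) :
    ∃ N, ∀ n, N ≤ n → C ≤ τ n := by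
  have h0 : Tendsto (fun n => 1 / τ n) atTop (nhds 0) := hsum.tendsto_atTop_zero
  have hC' : (0 : ℝ) < 1 / max C 1 := by positivity
  obtain ⟨N, hN⟩ := eventually_atTop.mp (h0.eventually_lt_const hC')
  refine ⟨N, fun n hn => ?_⟩
  have h1 := hN n hn
  have h2 : max C 1 < τ n := by
    have hmax : (0 : ℝ) < max C 1 := lt_of_lt_of_le one_pos (le_max_right _ _)
    by_contra h
    push_neg at h
    have : 1 / max C 1 ≤ 1 / τ n := one_div_le_one_div_of_le (htp n) h
    linarith
  exact le_trans (le_max_left _ _) h2.le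

lemma norm_div_ofReal (z : ℂ) {t : ℝ} (ht : 0 < t) : ‖z / (t : ℂ)‖ = ‖z‖ / t := by
  rw [norm_div, Complex.norm_real, Real.norm_eq_abs, abs_of_pos ht]

lemma factor_bounds (htp : ∀ n, 0 < τ n) (hτσ : ∀ n, τ n < σ n)
    {R : ℝ} (hR : 1 ≤ R) {n : ℕ} (hτn : 8 * R ≤ τ n) {z : ℂ} (hz : ‖z‖ ≤ R) :
    ((1 : ℂ) + z / (σ n : ℂ) ≠ 0) ∧ ‖fac τ σ n z - 1‖ ≤ 3 * R * (1 / τ n) ∧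
      ‖fac τ σ n z - 1‖ ≤ 1 / 2 ∧ (1 : ℝ) / 2 ≤ (fac τ σ n z).re ∧ fac τ σ n z ≠ 0 ∧
      ‖Complex.log (fac τ σ n z)‖ ≤ 5 * R * (1 / τ n) := by
  have hRpos : 0 < R := lt_of_lt_of_le one_pos hR
  have hτpos := htp n
  have hσpos : 0 < σ n := hτpos.trans (hτσ n)
  have hzσ : ‖z / (σ n : ℂ)‖ ≤ 1 / 8 := by
    rw [norm_div_ofReal z hσpos]
    rw [div_le_div_iff₀ hσpos (by norm_num : (0:ℝ) < 8)]
    have : 8 * R ≤ σ n := hτn.trans (hτσ n).le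
    nlinarith
  have hzτσ : ‖z / (τ n : ℂ) - z / (σ n : ℂ)‖ ≤ 2 * R / τ n := by
    calc ‖z / (τ n : ℂ) - z / (σ n : ℂ)‖ ≤ ‖z / (τ n : ℂ)‖ + ‖z / (σ n : ℂ)‖ :=
          norm_sub_le _ _
      _ = ‖z‖ / τ n + ‖z‖ / σ n := by rw [norm_div_ofReal z hτpos, norm_div_ofReal z hσpos]
      _ ≤ R / τ n + R / τ n := by
          gcongr
          exact (hτσ n).le
      _ = 2 * R / τ n := by ring
  have hvlow : (7 : ℝ) / 8 ≤ ‖(1 : ℂ) + z / (σ n : ℂ)‖ := by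
    have h1 : ‖(1 : ℂ)‖ ≤ ‖(1 : ℂ) + z / (σ n : ℂ)‖ + ‖z / (σ n : ℂ)‖ := by
      calc ‖(1 : ℂ)‖ = ‖((1 : ℂ) + z / (σ n : ℂ)) + (-(z / (σ n : ℂ)))‖ := by ring_nf
        _ ≤ ‖(1 : ℂ) + z / (σ n : ℂ)‖ + ‖-(z / (σ n : ℂ))‖ := norm_add_le _ _
        _ = ‖(1 : ℂ) + z / (σ n : ℂ)‖ + ‖z / (σ n : ℂ)‖ := by rw [norm_neg]
    simp only [norm_one] at h1
    linarith
  have hv0 : (1 : ℂ) + z / (σ n : ℂ) ≠ 0 := by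
    intro h
    rw [h, norm_zero] at hvlow
    linarith
  have hsub : fac τ σ n z - 1 = (z / (τ n : ℂ) - z / (σ n : ℂ)) / ((1 : ℂ) + z / (σ n : ℂ)) := by
    rw [fac, div_sub_one hv0]
    congr 1
    ring
  have hb1 : ‖fac τ σ n z - 1‖ ≤ 3 * R * (1 / τ n) := by
    rw [hsub, norm_div]
    calc ‖z / (τ n : ℂ) - z / (σ n : ℂ)‖ / ‖(1 : ℂ) + z / (σ n : ℂ)‖
        ≤ (2 * R / τ n) / (7 / 8) := by
          apply div_le_div₀ (by positivity) hzτσ (by norm_num) hvlow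
      _ ≤ 3 * R * (1 / τ n) := by
          rw [mul_one_div]
          have he : 2 * R / τ n / (7 / 8) = (16 * R / 7) / τ n := by ring
          rw [he]
          gcongr
          nlinarith
  have hb2 : ‖fac τ σ n z - 1‖ ≤ 1 / 2 := by
    have : 3 * R * (1 / τ n) ≤ 1 / 2 := by
      rw [mul_one_div, div_le_div_iff₀ hτpos (by norm_num : (0:ℝ) < 2)]
      nlinarith
    linarith
  have hre : (1 : ℝ) / 2 ≤ (fac τ σ n z).re := by
    have h1 : |(fac τ σ n z - 1).re| ≤ 1 / 2 :=
      le_trans (Complex.abs_re_le_norm _) hb2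
    have h2 : (fac τ σ n z).re = 1 + (fac τ σ n z - 1).re := by
      simp [Complex.sub_re]
    have := abs_le.mp h1
    rw [h2]
    linarith [this.1]
  have hne : fac τ σ n z ≠ 0 := by
    intro h
    rw [h] at hre
    norm_num at hre
  have hlog : ‖Complex.log (fac τ σ n z)‖ ≤ 5 * R * (1 / τ n) := by
    have h1 : Complex.log (fac τ σ n z) = Complex.log (1 + (fac τ σ n z - 1)) := by
      congr 1; ring
    rw [h1]
    calc ‖Complex.log (1 + (fac τ σ n z - 1))‖ ≤ (3 / 2) * ‖fac τ σ n z - 1‖ :=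
          Complex.norm_log_one_add_half_le_self hb2
      _ ≤ (3 / 2) * (3 * R * (1 / τ n)) := by gcongr
      _ ≤ 5 * R * (1 / τ n) := by
          have h5 : (0:ℝ) ≤ R * (1 / τ n) := by positivity
          nlinarith
  exact ⟨hv0, hb1, hb2, hre, hne, hlog⟩

lemma summable_log (htp : ∀ n, 0 < τ n) (hτσ : ∀ n, τ n < σ n)
    (hsum : Summable fun n => 1 / τ n) (z : ℂ) :
    Summable fun n => Complex.log (fac τ σ n z) := by
  set R := ‖z‖ + 1 with hR_def
  have hR : 1 ≤ R := by rw [hR_def]; linarith [norm_nonneg z]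
  have hzR : ‖z‖ ≤ R := by rw [hR_def]; linarith
  obtain ⟨N, hN⟩ := exists_tau_ge htp hsum (8 * R)
  have htail : Summable fun n => Complex.log (fac τ σ (n + N) z) := by
    apply Summable.of_norm_bounded (g := fun n => 5 * R * (1 / τ (n + N)))
    · exact (((summable_nat_add_iff N).mpr hsum).mul_left (5 * R)).congr fun n => by
        simp [mul_one_div]
    · intro n
      exact (factor_bounds htp hτσ hR (hN (n + N) (Nat.le_add_left N n)) hzR).2.2.2.2.2
  exact (summable_nat_add_iff N).mp htail





/-- The key decomposition lemma on a ball. -/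
lemma key (htp : ∀ n, 0 < τ n) (hτσ : ∀ n, τ n < σ n)
    (hsum : Summable fun n => 1 / τ n) {R : ℝ} (hR : 1 ≤ R) :
    ∃ N : ℕ, ∃ T : ℂ → ℂ,
      (∀ z ∈ ball (0 : ℂ) R, AnalyticAt ℂ T z) ∧ (∀ z, T z ≠ 0) ∧
      (∀ z ∈ ball (0 : ℂ) R, (∀ i, fac τ σ i z ≠ 0) →
        HasProd (fun n => fac τ σ n z) ((∏ i ∈ Finset.range N, fac τ σ i z) * T z)) ∧
      (∀ z ∈ ball (0 : ℂ) R,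
        (∏' n, fac τ σ n z) = (∏ i ∈ Finset.range N, fac τ σ i z) * T z) := by
  obtain ⟨N, hN⟩ := exists_tau_ge htp hsum (8 * R)
  have hball : ∀ z ∈ ball (0 : ℂ) R, ‖z‖ ≤ R := by
    intro z hz
    rw [mem_ball_zero_iff] at hz
    exact hz.le
  have hfb : ∀ n, N ≤ n → ∀ z ∈ ball (0 : ℂ) R,
      ((1 : ℂ) + z / (σ n : ℂ) ≠ 0) ∧ ‖fac τ σ n z - 1‖ ≤ 3 * R * (1 / τ n) ∧
      ‖fac τ σ n z - 1‖ ≤ 1 / 2 ∧ (1 : ℝ) / 2 ≤ (fac τ σ n z).re ∧ fac τ σ n z ≠ 0 ∧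
      ‖Complex.log (fac τ σ n z)‖ ≤ 5 * R * (1 / τ n) :=
    fun n hn z hz => factor_bounds htp hτσ hR (hN n hn) (hball z hz)
  have husum : Summable fun n => 5 * R * (1 / τ (n + N)) :=
    (((summable_nat_add_iff N).mpr hsum).mul_left (5 * R)).congr fun n => by
      simp [mul_one_div]
  have hlogtail : ∀ z ∈ ball (0 : ℂ) R, Summable fun n => Complex.log (fac τ σ (n + N) z) := by
    intro z hz
    apply Summable.of_norm_bounded (g := fun n => 5 * R * (1 / τ (n + N))) husum
    intro n
    exact (hfb (n + N) (Nat.le_add_left N n) z hz).2.2.2.2.2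
  have hHP : ∀ z ∈ ball (0 : ℂ) R, (∀ i, fac τ σ i z ≠ 0) →
      HasProd (fun n => fac τ σ n z) ((∏ i ∈ Finset.range N, fac τ σ i z) *
        Complex.exp (∑' n, Complex.log (fac τ σ (n + N) z))) := by
    intro z hz hne
    exact (hasProd_of_logs (fun n => hne (n + N)) (hlogtail z hz)).prod_range_mul
  refine ⟨N, fun z => Complex.exp (∑' n, Complex.log (fac τ σ (n + N) z)), ?_,
    fun z => Complex.exp_ne_zero _, hHP, ?_⟩
  · -- analyticity
    have hLdiff : DifferentiableOn ℂ (fun z => ∑' n, Complex.log (fac τ σ (n + N) z))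
        (ball (0 : ℂ) R) := by
      apply differentiableOn_tsum_of_summable_norm husum ?_ isOpen_ball
      · intro n z hz
        exact (hfb (n + N) (Nat.le_add_left N n) z hz).2.2.2.2.2
      · intro i z hz
        apply DifferentiableAt.differentiableWithinAt
        have hu : DifferentiableAt ℂ (fun w : ℂ => (1 : ℂ) + w / (τ (i + N) : ℂ)) z :=
          (differentiableAt_id.div_const _).const_add 1
        have hv : DifferentiableAt ℂ (fun w : ℂ => (1 : ℂ) + w / (σ (i + N) : ℂ)) z :=
          (differentiableAt_id.div_const _).const_add 1
        have hvne := (hfb (i + N) (Nat.le_add_left N i) z hz).1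
        have hfd : DifferentiableAt ℂ (fun w => fac τ σ (i + N) w) z := hu.div hv hvne
        apply hfd.clog
        left
        have := (hfb (i + N) (Nat.le_add_left N i) z hz).2.2.2.1
        linarith
    intro z hz
    exact (hLdiff.cexp).analyticAt (isOpen_ball.mem_nhds hz)
  · -- equality
    intro z hz
    by_cases hne : ∀ i, fac τ σ i z ≠ 0
    · exact (hHP z hz hne).tprod_eq
    · push_neg at hne
      obtain ⟨i, hi⟩ := hne
      have hiN : i < N := by
        by_contra h
        push_neg at h
        exact (hfb i h z hz).2.2.2.2.1 hi
      rw [(hasProd_zero hi).tprod_eq,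
        Finset.prod_eq_zero (Finset.mem_range.mpr hiN) hi, zero_mul]





lemma fac_mero (htp : ∀ n, 0 < τ n) (hsp : ∀ n, 0 < σ n) (n : ℕ) (z : ℂ) :
    MeromorphicAt (fac τ σ n) z := by
  have hτne : ((τ n : ℝ) : ℂ) ≠ 0 := Complex.ofReal_ne_zero.mpr (htp n).ne'
  have hσne : ((σ n : ℝ) : ℂ) ≠ 0 := Complex.ofReal_ne_zero.mpr (hsp n).ne'
  have h1 : AnalyticAt ℂ (fun w : ℂ => (1 : ℂ) + w / (τ n : ℂ)) z :=
    analyticAt_const.add (analyticAt_id.div analyticAt_const hτne)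
  have h2 : AnalyticAt ℂ (fun w : ℂ => (1 : ℂ) + w / (σ n : ℂ)) z :=
    analyticAt_const.add (analyticAt_id.div analyticAt_const hσne)
  exact h1.meromorphicAt.div h2.meromorphicAt

lemma mero_prod {g : ℕ → ℂ → ℂ} {z : ℂ} (h : ∀ i, MeromorphicAt (g i) z) (N : ℕ) :
    MeromorphicAt (fun w => ∏ i ∈ Finset.range N, g i w) z := by
  induction N with
  | zero => simpa using MeromorphicAt.const (1 : ℂ) z
  | succ k ih =>
      simp only [Finset.prod_range_succ]
      exact ih.mul (h k)

lemma fac_analytic (htp : ∀ n, 0 < τ n) (hsp : ∀ n, 0 < σ n) (n : ℕ) {z : ℂ}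
    (h : (1 : ℂ) + z / (σ n : ℂ) ≠ 0) : AnalyticAt ℂ (fac τ σ n) z := by
  have hτne : ((τ n : ℝ) : ℂ) ≠ 0 := Complex.ofReal_ne_zero.mpr (htp n).ne'
  have hσne : ((σ n : ℝ) : ℂ) ≠ 0 := Complex.ofReal_ne_zero.mpr (hsp n).ne'
  have h1 : AnalyticAt ℂ (fun w : ℂ => (1 : ℂ) + w / (τ n : ℂ)) z :=
    analyticAt_const.add (analyticAt_id.div analyticAt_const hτne)
  have h2 : AnalyticAt ℂ (fun w : ℂ => (1 : ℂ) + w / (σ n : ℂ)) z :=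
    analyticAt_const.add (analyticAt_id.div analyticAt_const hσne)
  exact h1.div h2 h

lemma analytic_prod {g : ℕ → ℂ → ℂ} {z : ℂ} (h : ∀ i, AnalyticAt ℂ (g i) z) (N : ℕ) :
    AnalyticAt ℂ (fun w => ∏ i ∈ Finset.range N, g i w) z := by
  induction N with
  | zero => simpa using (analyticAt_const : AnalyticAt ℂ (fun _ : ℂ => (1 : ℂ)) z)
  | succ k ih =>
      simp only [Finset.prod_range_succ]
      exact ih.mul (h k)

lemma fac_conj (n : ℕ) (z : ℂ) :
    fac τ σ n ((starRingEnd ℂ) z) = (starRingEnd ℂ) (fac τ σ n z) := by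
  simp [fac, map_div₀, map_add, Complex.conj_ofReal]

/-- the main argument estimate -/
lemma main_arg (htp : ∀ n, 0 < τ n) (hτσ : ∀ n, τ n < σ n) (hστ : ∀ n, σ n < τ (n + 1))
    (hsum : Summable fun n => 1 / τ n) {z : ℂ} (hz : 0 < z.im) :
    (∏' n, fac τ σ n z) ≠ 0 ∧ 0 < (∏' n, fac τ σ n z).arg ∧
      (∏' n, fac τ σ n z).arg < Real.pi ∧ 0 < (∏' n, fac τ σ n z).im := by
  have hsp : ∀ n, 0 < σ n := fun n => (htp n).trans (hτσ n)
  have hui : ∀ n, 0 < ((1 : ℂ) + z / (τ n : ℂ)).im := by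
    intro n
    rw [im_one_add_div]
    exact div_pos hz (htp n)
  have hvi : ∀ n, 0 < ((1 : ℂ) + z / (σ n : ℂ)).im := by
    intro n
    rw [im_one_add_div]
    exact div_pos hz (hsp n)
  have hu0 : ∀ n, (1 : ℂ) + z / (τ n : ℂ) ≠ 0 := fun n => one_add_div_ne_zero hz (htp n)
  have hv0 : ∀ n, (1 : ℂ) + z / (σ n : ℂ) ≠ 0 := fun n => one_add_div_ne_zero hz (hsp n)
  have hfac_ne : ∀ n, fac τ σ n z ≠ 0 := fun n => div_ne_zero (hu0 n) (hv0 n)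
  have him : ∀ n, 0 < (fac τ σ n z).im := fun n => im_fac_pos hz (htp n) (hτσ n)
  have hθpos : ∀ n, 0 < (fac τ σ n z).arg := fun n => (argUHP (him n)).1
  have hθeq : ∀ n, (fac τ σ n z).arg
      = ((1 : ℂ) + z / (τ n : ℂ)).arg - ((1 : ℂ) + z / (σ n : ℂ)).arg :=
    fun n => argDiv (hui n) (hvi n)
  have hcross : ∀ n, ((1 : ℂ) + z / (τ (n + 1) : ℂ)).arg ≤ ((1 : ℂ) + z / (σ n : ℂ)).arg := by
    intro n
    have h1 := argDiv (hui (n + 1)) (hvi n)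
    have h2 : (((1 : ℂ) + z / (τ (n + 1) : ℂ)) / ((1 : ℂ) + z / (σ n : ℂ))).arg < 0 :=
      Complex.arg_neg_iff.mpr (im_fac_neg hz (hsp n) (hστ n))
    linarith [h1 ▸ h2]
  have hpartial : ∀ n, ∑ i ∈ Finset.range (n + 1), (fac τ σ i z).arg
      ≤ ((1 : ℂ) + z / (τ 0 : ℂ)).arg - ((1 : ℂ) + z / (σ n : ℂ)).arg := by
    intro n
    induction n with
    | zero => simp [Finset.sum_range_one, hθeq 0]
    | succ k ih =>
        rw [Finset.sum_range_succ]
        have h1 := hθeq (k + 1)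
        have h2 := hcross k
        linarith
  have hrange : ∀ n, ∑ i ∈ Finset.range n, (fac τ σ i z).arg
      ≤ ((1 : ℂ) + z / (τ 0 : ℂ)).arg := by
    intro n
    cases n with
    | zero => simpa using (argUHP (hui 0)).1.le
    | succ k =>
        have h1 := hpartial k
        have h2 := (argUHP (hvi k)).1
        linarith
  have hlog := summable_log htp hτσ hsum z
  have hHP : HasProd (fun n => fac τ σ n z)
      (Complex.exp (∑' n, Complex.log (fac τ σ n z))) := hasProd_of_logs hfac_ne hlog
  have hGeq : (∏' n, fac τ σ n z) = Complex.exp (∑' n, Complex.log (fac τ σ n z)) :=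
    hHP.tprod_eq
  have hSim : HasSum (fun n => (fac τ σ n z).arg)
      (∑' n, Complex.log (fac τ σ n z)).im := by
    have h1 := hlog.hasSum.map Complex.imCLM Complex.imCLM.continuous
    simpa [Function.comp_def, Complex.log_im] using h1
  have hA0 := argUHP (hui 0)
  have hle : (∑' n, Complex.log (fac τ σ n z)).im ≤ ((1 : ℂ) + z / (τ 0 : ℂ)).arg := by
    rw [← hSim.tsum_eq]
    exact Real.tsum_le_of_sum_range_le (fun n => (hθpos n).le) hrange
  have hlow : 0 < (∑' n, Complex.log (fac τ σ n z)).im := by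
    rw [← hSim.tsum_eq]
    have h1 : ∑ i ∈ ({0} : Finset ℕ), (fac τ σ i z).arg
        ≤ ∑' n, (fac τ σ n z).arg :=
      Summable.sum_le_tsum _ (fun i _ => (hθpos i).le) hSim.summable
    simp only [Finset.sum_singleton] at h1
    linarith [hθpos 0]
  have harg : (∏' n, fac τ σ n z).arg = (∑' n, Complex.log (fac τ σ n z)).im := by
    rw [hGeq]
    exact argExp (by linarith [Real.pi_pos]) (by linarith [hA0.2])
  refine ⟨hGeq ▸ Complex.exp_ne_zero _, ?_, ?_, ?_⟩
  · rw [harg]; exact hlow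
  · rw [harg]; linarith [hA0.2]
  · rw [hGeq, Complex.exp_im]
    apply mul_pos (Real.exp_pos _)
    exact Real.sin_pos_of_pos_of_lt_pi hlow (by linarith [hA0.2])


end Stmt19Aux

noncomputable section

/-- A meromorphic function on `ℂ` is an R-function if it is real on `ℝ` (where defined)
and `Im F(z) · Im z ≥ 0` for all non-real `z` in its domain. -/
def RFun (F : ℂ → ℂ) : Prop :=
  (∀ z : ℂ, MeromorphicAt F z) ∧
  (∀ x : ℝ, AnalyticAt ℂ F (x : ℂ) → (F (x : ℂ)).im = 0) ∧
  (∀ z : ℂ, z.im ≠ 0 → AnalyticAt ℂ F z → 0 ≤ (F z).im * z.im)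

/-- An R-function is an S-function if in addition it is analytic and nonnegative
on `[0, ∞)`. -/
def SFun (F : ℂ → ℂ) : Prop :=
  RFun F ∧ ∀ x : ℝ, 0 ≤ x → AnalyticAt ℂ F (x : ℂ) ∧ 0 ≤ (F (x : ℂ)).re

/-- Let `0 < τ₀ < σ₀ < τ₁ < σ₁ < ⋯` with `Σ 1/τ_ν < ∞`.  Then the product
`G(z) = ∏_ν (1+z/τ_ν)/(1+z/σ_ν)` converges (is multipliable away from the poles) to a
meromorphic function on `ℂ`, `0 < Arg G(z) < π` whenever `Im z > 0`, and `G` is an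
S-function. -/
theorem stmt19 (τ σ : ℕ → ℝ)
    (hτ0 : 0 < τ 0) (hτσ : ∀ n, τ n < σ n) (hστ : ∀ n, σ n < τ (n + 1))
    (hsum : Summable fun n => 1 / τ n) :
    (∀ z : ℂ, (∀ n, (1 : ℂ) + z / (σ n : ℂ) ≠ 0) →
      Multipliable fun n => ((1 : ℂ) + z / (τ n : ℂ)) / ((1 : ℂ) + z / (σ n : ℂ))) ∧
    (∀ z : ℂ, MeromorphicAt
      (fun w => ∏' n, ((1 : ℂ) + w / (τ n : ℂ)) / ((1 : ℂ) + w / (σ n : ℂ))) z) ∧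
    (∀ z : ℂ, 0 < z.im →
      0 < (∏' n, ((1 : ℂ) + z / (τ n : ℂ)) / ((1 : ℂ) + z / (σ n : ℂ))).arg ∧
      (∏' n, ((1 : ℂ) + z / (τ n : ℂ)) / ((1 : ℂ) + z / (σ n : ℂ))).arg < Real.pi) ∧
    SFun (fun z => ∏' n, ((1 : ℂ) + z / (τ n : ℂ)) / ((1 : ℂ) + z / (σ n : ℂ))) := by
  classical
  open Stmt19Aux in
  have htp : ∀ n, 0 < τ n := tau_pos hτ0 hτσ hστ
  have hsp : ∀ n, 0 < σ n := fun n => (htp n).trans (hτσ n)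
  -- Part 2 : meromorphy (proved first, reused in SFun)
  have hmero : ∀ z : ℂ, MeromorphicAt (fun w => ∏' n, fac τ σ n w) z := by
    intro z₀
    obtain ⟨N, T, hT, hT0, hHP, hEq⟩ :=
      key htp hτσ hsum (R := ‖z₀‖ + 1) (by linarith [norm_nonneg z₀])
    have hball : z₀ ∈ Metric.ball (0 : ℂ) (‖z₀‖ + 1) :=
      mem_ball_zero_iff.mpr (by linarith)
    have hM : MeromorphicAt (fun w => (∏ i ∈ Finset.range N, fac τ σ i w) * T w) z₀ :=
      (mero_prod (fun i => fac_mero htp hsp i z₀) N).mul (hT z₀ hball).meromorphicAt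
    have hev : (fun w => (∏ i ∈ Finset.range N, fac τ σ i w) * T w)
        =ᶠ[nhds z₀] fun w => ∏' n, fac τ σ n w := by
      filter_upwards [Metric.isOpen_ball.mem_nhds hball] with w hw
      exact (hEq w hw).symm
    exact hM.congr (hev.filter_mono nhdsWithin_le_nhds)
  -- conjugation symmetry
  have hGconj : ∀ z : ℂ,
      (∏' n, fac τ σ n ((starRingEnd ℂ) z)) = (starRingEnd ℂ) (∏' n, fac τ σ n z) := by
    intro z
    exact (tprod_congr fun n => fac_conj n z).trans (tprod_conj _).symm
  refine ⟨?_, hmero, ?_, ?_⟩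
  · -- Part 1 : multipliability
    intro z hden
    by_cases hne : ∀ i, fac τ σ i z ≠ 0
    · exact (hasProd_of_logs hne (summable_log htp hτσ hsum z)).multipliable
    · push_neg at hne
      obtain ⟨i, hi⟩ := hne
      exact ⟨0, hasProd_zero hi⟩
  · -- Part 3 : argument bounds
    intro z hz
    have h := main_arg htp hτσ hστ hsum hz
    exact ⟨h.2.1, h.2.2.1⟩
  · -- Part 4 : S-function
    refine ⟨⟨hmero, ?_, ?_⟩, ?_⟩
    · -- real on ℝ
      intro x _
      have h := hGconj (x : ℂ)
      rw [Complex.conj_ofReal] at h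
      exact Complex.conj_eq_iff_im.mp h.symm
    · -- Im F(z) · Im z ≥ 0
      intro z hz _
      rcases lt_or_gt_of_ne hz with hneg | hpos
      · have hw : 0 < ((starRingEnd ℂ) z).im := by
          rw [Complex.conj_im]
          linarith
        have h4 := (main_arg htp hτσ hστ hsum hw).2.2.2
        have h5 := congrArg Complex.im (hGconj z)
        rw [Complex.conj_im] at h5
        -- h5 : (∏' fac n (conj z)).im = - (∏' fac n z).im
        have h6 : (∏' n, fac τ σ n z).im < 0 := by
          rw [← neg_pos, ← h5]
          exact h4
        show 0 ≤ (∏' n, fac τ σ n z).im * z.im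
        nlinarith
      · have h4 := (main_arg htp hτσ hστ hsum hpos).2.2.2
        show 0 ≤ (∏' n, fac τ σ n z).im * z.im
        nlinarith
    · -- analytic and nonneg on [0, ∞)
      intro x hx
      obtain ⟨N, T, hT, hT0, hHP, hEq⟩ :=
        key htp hτσ hsum (R := x + 1) (by linarith)
      have hball : (x : ℂ) ∈ Metric.ball (0 : ℂ) (x + 1) := by
        rw [mem_ball_zero_iff, Complex.norm_real, Real.norm_eq_abs, _root_.abs_of_nonneg hx]
        linarith
      have hvne : ∀ i, (1 : ℂ) + (x : ℂ) / (σ i : ℂ) ≠ 0 := by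
        intro i
        have h0 : (0 : ℝ) < 1 + x / σ i := by
          have := div_nonneg hx (hsp i).le
          linarith
        have hc : (1 : ℂ) + (x : ℂ) / (σ i : ℂ) = ((1 + x / σ i : ℝ) : ℂ) := by
          push_cast
          ring
        rw [hc]
        exact Complex.ofReal_ne_zero.mpr h0.ne'
      have hAA : AnalyticAt ℂ (fun w => (∏ i ∈ Finset.range N, fac τ σ i w) * T w) (x : ℂ) :=
        (analytic_prod (fun i => fac_analytic htp hsp i (hvne i)) N).mul (hT _ hball)
      have hev : (fun w => (∏ i ∈ Finset.range N, fac τ σ i w) * T w)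
          =ᶠ[nhds (x : ℂ)] fun w => ∏' n, fac τ σ n w := by
        filter_upwards [Metric.isOpen_ball.mem_nhds hball] with w hw
        exact (hEq w hw).symm
      constructor
      · exact hAA.congr hev
      · -- nonnegativity of the real part
        have hcast : ∀ i, fac τ σ i (x : ℂ) = (((1 + x / τ i) / (1 + x / σ i) : ℝ) : ℂ) := by
          intro i
          rw [fac]
          push_cast
          ring
        have hposR : ∀ i, (0 : ℝ) < (1 + x / τ i) / (1 + x / σ i) := by
          intro i
          have h1 : (0 : ℝ) < 1 + x / τ i := by
            have := div_nonneg hx (htp i).le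
            linarith
          have h2 : (0 : ℝ) < 1 + x / σ i := by
            have := div_nonneg hx (hsp i).le
            linarith
          positivity
        have hne : ∀ i, fac τ σ i (x : ℂ) ≠ 0 := by
          intro i
          rw [hcast i]
          exact Complex.ofReal_ne_zero.mpr (hposR i).ne'
        have hHP2 := hHP (x : ℂ) hball hne
        have htend := hHP2.tendsto_prod_nat
        have h2 : Filter.Tendsto (fun n => (∏ i ∈ Finset.range n, fac τ σ i (x : ℂ)).re)
            Filter.atTop (nhds (((∏ i ∈ Finset.range N, fac τ σ i (x : ℂ)) * T (x : ℂ)).re)) :=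
          (Complex.continuous_re.tendsto _).comp htend
        have h3 : ∀ n, (0 : ℝ) ≤ (∏ i ∈ Finset.range n, fac τ σ i (x : ℂ)).re := by
          intro n
          have hc : (∏ i ∈ Finset.range n, fac τ σ i (x : ℂ))
              = ((∏ i ∈ Finset.range n, (1 + x / τ i) / (1 + x / σ i) : ℝ) : ℂ) := by
            rw [Complex.ofReal_prod]
            exact Finset.prod_congr rfl fun i _ => hcast i
          rw [hc, Complex.ofReal_re]
          exact Finset.prod_nonneg fun i _ => (hposR i).le
        have h4 : (0 : ℝ) ≤ ((∏ i ∈ Finset.range N, fac τ σ i (x : ℂ)) * T (x : ℂ)).re :=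
          ge_of_tendsto' h2 h3
        show (0 : ℝ) ≤ (∏' n, fac τ σ n (x : ℂ)).re
        rw [hEq (x : ℂ) hball]
        exact h4

end
end
end
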